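/- Let C > 0, D = √(C/2), and define h_j = 2·log(D·j + 1) for j ≥ 0. Then for every j ≥ 1, 2h_j − h_{j−1} − h_{j+1} > C·e^{−h_j}; that is, {h_j} is a super-solution of the difference equation L_j p = C·e^{−p_j}, where L_j p = 2p_j − p_{j−1} − p_{j+1}. -/

import Mathlib

lemma log_one_add_gt (t : ℝ) (ht : 0 < t) : t / (1 + t) < Real.log (1 + t) := by
  have h1 : (0:ℝ) < 1 + t := by linarith
  have h2 : -(t / (1 + t)) ≠ 0 := by
    have : 0 < t / (1 + t) := by positivity
    linarith
  have h3 := Real.add_one_lt_exp h2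
  have h4 : 1 - t / (1 + t) = 1 / (1 + t) := by field_simp; ring
  have h5 : Real.log (1 / (1 + t)) < -(t / (1 + t)) := by
    have h6 : Real.log (1 / (1 + t)) < Real.log (Real.exp (-(t / (1 + t)))) :=
      Real.log_lt_log (by positivity) (by linarith)
    rwa [Real.log_exp] at h6
  rw [Real.log_div one_ne_zero h1.ne', Real.log_one] at h5
  linarith

/-- The sequence `h_j = 2 log(D j + 1)`, `D = √(C/2)`, is a super-solution of the
difference equation `2p_j - p_{j-1} - p_{j+1} = C e^{-p_j}`: for every `j ≥ 1`,
`2h_j - h_{j-1} - h_{j+1} > C e^{-h_j}`. -/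
theorem h_is_supersolution (C : ℝ) (hC : 0 < C) (h : ℕ → ℝ)
    (hh : ∀ j : ℕ, h j = 2 * Real.log (Real.sqrt (C / 2) * (j : ℝ) + 1)) :
    ∀ j : ℕ, 2 * h (j+1) - h j - h (j+2) > C * Real.exp (-(h (j+1))) := by
  intro j
  set D := Real.sqrt (C / 2) with hDdef
  have hD : 0 < D := Real.sqrt_pos.mpr (by positivity)
  have hD2 : D ^ 2 = C / 2 := Real.sq_sqrt (by positivity)
  set a : ℝ := D * (j : ℝ) + 1 with hadef
  have ha : 0 < a := by positivity
  have e1 : D * ((j : ℝ) + 1) + 1 = a + D := by ring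
  have e2 : D * ((j : ℝ) + 2) + 1 = a + 2 * D := by ring
  have haD : 0 < a + D := by linarith
  have haD2 : 0 < a + 2 * D := by linarith
  rw [hh j, hh (j+1), hh (j+2)]
  push_cast
  rw [e1, e2, ← hadef]
  -- rewrite the exponential
  have hexp : Real.exp (-(2 * Real.log (a + D))) = 1 / (a + D) ^ 2 := by
    rw [show (2:ℝ) * Real.log (a + D) = Real.log ((a + D) ^ 2) by
        rw [Real.log_pow]; push_cast; ring,
      Real.exp_neg, Real.exp_log (by positivity)]
    rw [one_div]
  rw [hexp]
  clear_value a D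
  set t : ℝ := D ^ 2 / (a * (a + 2 * D)) with htdef
  have hv : 0 < a * (a + 2 * D) := by positivity
  have ht : 0 < t := by positivity
  have h1t : 1 + t = (a + D) ^ 2 / (a * (a + 2 * D)) := by
    rw [eq_div_iff hv.ne', htdef, add_mul, one_mul, div_mul_cancel₀ _ hv.ne']
    ring
  have hlog : Real.log (1 + t) =
      2 * Real.log (a + D) - Real.log a - Real.log (a + 2 * D) := by
    rw [h1t, Real.log_div (by positivity) hv.ne',
      show (a + D) ^ 2 = (a + D) * (a + D) by ring,
      Real.log_mul haD.ne' haD.ne', Real.log_mul ha.ne' haD2.ne']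
    ring
  have hts : t / (1 + t) = D ^ 2 / (a + D) ^ 2 := by
    rw [h1t, htdef]; field_simp
  have hrhs : C * (1 / (a + D) ^ 2) = 2 * (t / (1 + t)) := by
    rw [hts, hD2]; ring
  rw [hrhs]
  have key := log_one_add_gt t ht
  linarith [key, hlog]
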